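/- Let g : Fin t → ℝⁿ be a linearly independent family, fix k ≤ t, let W be the linear span of {g i : (i : ℕ) < k}, and let ν : ℝⁿ → ℝⁿ be the orthogonal projection onto Wᗮ. For subsets I, J ⊆ Fin t, each containing every index i with (i : ℕ) < k, if I ≠ J then the images ν(C_I) and ν(C_J) of the open simplicial cones C_I and C_J under ν are disjoint. (This realises, within one simplicial fan, the dichotomy used in the proof of Lemma 3.10 that images of cones under ν_E are either disjoint or equal.) -/

import Mathlib

/-- The open simplicial cone on the vectors `g i`, `i ∈ I`. -/
def openCone {n t : ℕ} (g : Fin t → EuclideanSpace ℝ (Fin n)) (I : Finset (Fin t)) :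
    Set (EuclideanSpace ℝ (Fin n)) :=
  {x | ∃ α : Fin t → ℝ, (∀ i ∈ I, 0 < α i) ∧ x = ∑ i ∈ I, α i • g i}

/-- Within one simplicial fan, images under the orthogonal projection `ν` of
distinct cones containing the face indexed by `{i | i < k}` are disjoint
(the dichotomy used in the proof of Lemma 3.10). -/
theorem stmt13 (n t k : ℕ) (hk : k ≤ t)
    (g : Fin t → EuclideanSpace ℝ (Fin n))
    (hg : LinearIndependent ℝ g)
    (W : Submodule ℝ (EuclideanSpace ℝ (Fin n)))
    (hW : W = Submodule.span ℝ {v | ∃ i : Fin t, (i : ℕ) < k ∧ v = g i})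
    (ν : EuclideanSpace ℝ (Fin n) → EuclideanSpace ℝ (Fin n))
    (hν : ∀ v, ν v = (Submodule.orthogonalProjection Wᗮ v : EuclideanSpace ℝ (Fin n)))
    (I J : Finset (Fin t))
    (hI : ∀ i : Fin t, (i : ℕ) < k → i ∈ I)
    (hJ : ∀ i : Fin t, (i : ℕ) < k → i ∈ J)
    (hIJ : I ≠ J) :
    Disjoint (ν '' openCone g I) (ν '' openCone g J) := by
  rw [Set.disjoint_left]
  rintro z ⟨x, ⟨α, hα, rfl⟩, rfl⟩ ⟨y, ⟨γ, hγ, rfl⟩, hzy⟩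
  -- x - y ∈ W
  have hproj : (Submodule.orthogonalProjection Wᗮ ((∑ i ∈ I, α i • g i) - (∑ i ∈ J, γ i • g i))) = 0 := by
    rw [map_sub]
    have h1 := hν (∑ i ∈ I, α i • g i)
    have h2 := hν (∑ i ∈ J, γ i • g i)
    rw [h1, h2] at hzy
    have := Subtype.coe_injective hzy
    rw [this, sub_self]
  have hmem : (∑ i ∈ I, α i • g i) - (∑ i ∈ J, γ i • g i) ∈ W := by
    have h : ((∑ i ∈ I, α i • g i) - (∑ i ∈ J, γ i • g i)) - (Submodule.orthogonalProjection Wᗮ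
        ((∑ i ∈ I, α i • g i) - (∑ i ∈ J, γ i • g i)) : EuclideanSpace ℝ (Fin n)) ∈ Wᗮᗮ :=
      Submodule.sub_starProjection_mem_orthogonal (K := Wᗮ)
      ((∑ i ∈ I, α i • g i) - (∑ i ∈ J, γ i • g i))
    rw [hproj] at h
    simpa [Submodule.orthogonal_orthogonal] using h
  have hset : {v | ∃ i : Fin t, (i : ℕ) < k ∧ v = g i}
      = g '' {i : Fin t | (i : ℕ) < k} := by
    ext v
    simp [Set.mem_image, eq_comm]
  rw [hW, hset, Finsupp.mem_span_image_iff_linearCombination] at hmem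
  obtain ⟨l, hlsupp, hl⟩ := hmem
  have hl' : (∑ i : Fin t, l i • g i)
      = (∑ i ∈ I, α i • g i) - (∑ i ∈ J, γ i • g i) := by
    rw [← hl, Finsupp.linearCombination_apply, Finsupp.sum_fintype]
    intro i; simp
  set c : Fin t → ℝ := fun i =>
    (if i ∈ I then α i else 0) - (if i ∈ J then γ i else 0) - l i with hc
  have hzero : ∀ i, c i = 0 := by
    have hsum : ∑ i : Fin t, c i • g i = 0 := by
      simp only [hc, sub_smul, ite_smul, zero_smul, Finset.sum_sub_distrib]
      rw [Finset.sum_ite_mem, Finset.sum_ite_mem, Finset.univ_inter, Finset.univ_inter,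
        hl']
      abel
    exact Fintype.linearIndependent_iff.mp hg c hsum
  obtain ⟨i₀, hi₀⟩ : ∃ i, (i ∈ I ∧ i ∉ J) ∨ (i ∈ J ∧ i ∉ I) := by
    by_contra h
    push_neg at h
    exact hIJ (Finset.ext fun i => ⟨fun hi => (h i).1 hi, fun hi => (h i).2 hi⟩)
  have hk₀ : ¬ ((i₀ : ℕ) < k) := by
    intro hlt
    rcases hi₀ with ⟨_, h2⟩ | ⟨_, h2⟩
    · exact h2 (hJ i₀ hlt)
    · exact h2 (hI i₀ hlt)
  have hl₀ : l i₀ = 0 := by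
    by_contra h
    exact hk₀ (hlsupp (Finsupp.mem_support_iff.mpr h))
  have := hzero i₀
  rcases hi₀ with ⟨h1, h2⟩ | ⟨h1, h2⟩
  · rw [hc] at this
    simp only [h1, h2, if_pos, if_neg, hl₀] at this
    simp at this
    linarith [hα i₀ h1]
  · rw [hc] at this
    simp only [h1, h2, if_pos, if_neg, hl₀] at this
    simp at this
    linarith [hγ i₀ h1]
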